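/- Let G ⊆ ℝ^J, let d : cl(G) → 𝒫(ℝ^J) be a set-valued map, let ϕ, η : [0,∞) → ℝ^J be continuous functions, and fix t ∈ (0,∞). Suppose that for every s ∈ [0,t), η(t) − η(s) lies in the closed convex hull of ⋃_{u ∈ [s,t]} d(ϕ(u)). Then for every s ∈ [0,t), η(t) − η(s) lies in the closed convex hull of ⋃_{u ∈ (s,t]} d(ϕ(u)). -/
import Mathlib


/-- Lemma `lem-esp`: if for all s ∈ [0,t) the increment η(t) − η(s) lies in
the closed convex hull of ⋃_{u∈[s,t]} d(ϕ(u)), then it also lies in the closed convex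
hull of the half-open union ⋃_{u∈(s,t]} d(ϕ(u)). -/
theorem stmt2 {J : ℕ} (G : Set (EuclideanSpace ℝ (Fin J)))
    (d : EuclideanSpace ℝ (Fin J) → Set (EuclideanSpace ℝ (Fin J)))
    (φ η : ℝ → EuclideanSpace ℝ (Fin J))
    (hφ : Continuous φ) (hη : Continuous η)
    (hφG : ∀ u : ℝ, 0 ≤ u → φ u ∈ closure G)
    (t : ℝ) (ht : 0 < t)
    (h : ∀ s ∈ Set.Ico (0:ℝ) t,
      η t - η s ∈ closure (convexHull ℝ (⋃ u ∈ Set.Icc s t, d (φ u)))) :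
    ∀ s ∈ Set.Ico (0:ℝ) t,
      η t - η s ∈ closure (convexHull ℝ (⋃ u ∈ Set.Ioc s t, d (φ u))) := by
  intro s hs
  obtain ⟨hs0, hst⟩ := hs
  -- sequence sₙ = s + (t-s)/(n+2) ↓ s
  set f : ℕ → ℝ := fun n => s + (t - s) / (n + 2) with hf
  have hpos : ∀ n : ℕ, (0:ℝ) < (n:ℝ) + 2 := by
    intro n; positivity
  have hlt : ∀ n : ℕ, s < f n := by
    intro n
    have : 0 < (t - s) / (n + 2) := div_pos (by linarith) (hpos n)
    simp only [hf]; linarith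
  have hltt : ∀ n : ℕ, f n < t := by
    intro n
    have h1 : (t - s) / (n + 2) < t - s := by
      rw [div_lt_iff₀ (hpos n)]
      nlinarith [hpos n, sub_pos.mpr hst]
    simp only [hf]; linarith
  have htend : Filter.Tendsto f Filter.atTop (nhds s) := by
    have h2 : Filter.Tendsto (fun n : ℕ => (t - s) / (n + 2)) Filter.atTop (nhds 0) := by
      apply Filter.Tendsto.div_atTop tendsto_const_nhds
      exact Filter.tendsto_atTop_add_const_right _ 2 tendsto_natCast_atTop_atTop
    simpa using h2.const_add s
  have hmem : ∀ n : ℕ,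
      η t - η (f n) ∈ closure (convexHull ℝ (⋃ u ∈ Set.Ioc s t, d (φ u))) := by
    intro n
    have hfn : f n ∈ Set.Ico (0:ℝ) t := ⟨le_of_lt (lt_of_le_of_lt hs0 (hlt n)), hltt n⟩
    have hsub : (⋃ u ∈ Set.Icc (f n) t, d (φ u)) ⊆ ⋃ u ∈ Set.Ioc s t, d (φ u) := by
      apply Set.biUnion_mono _ (fun u _ => subset_rfl)
      intro u hu
      exact ⟨lt_of_lt_of_le (hlt n) hu.1, hu.2⟩
    exact closure_mono (convexHull_mono hsub) (h (f n) hfn)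
  have htend2 : Filter.Tendsto (fun n => η t - η (f n)) Filter.atTop (nhds (η t - η s)) :=
    Filter.Tendsto.const_sub _ ((hη.tendsto s).comp htend)
  have := isClosed_closure.mem_of_tendsto htend2 (Filter.Eventually.of_forall hmem)
  exact this
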